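/- In the distinguished pre-Nichols algebra of super type A, the iterated adjoint elements E_{j,k} = (ad_c E_j)⋯(ad_c E_{k−1}) E_k satisfy the coproduct formula Δ(E_{j,k}) = E_{j,k}⊗1 + 1⊗E_{j,k} + Σ_{j≤ℓ<k} (1 − q_{ℓ,ℓ+1}q_{ℓ+1,ℓ}) E_{j,ℓ} ⊗ E_{ℓ+1,k}. -/
import Mathlib


/-- The iterated braided adjoint elements `E_{j,k} = (ad_c E_j) ⋯ (ad_c E_{k−1}) E_k` of a
diagonal braided vector space: `E_{j,j} = E_j` and
`E_{j,k} = E_j E_{j+1,k} − χ(α_j, α_{j+1} + ⋯ + α_k) E_{j+1,k} E_j`,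
where `χ(α_j, α_{j+1} + ⋯ + α_k) = ∏_{l=j+1}^{k} q_{jl}`. -/
noncomputable def EE (𝕜 : Type*) [Field 𝕜] {B : Type*} [Ring B] [Algebra 𝕜 B]
    (E : ℕ → B) (q : ℕ → ℕ → 𝕜) (j kk : ℕ) : B :=
  if h : kk ≤ j then E j
  else E j * EE 𝕜 E q (j + 1) kk -
    (∏ l ∈ Finset.Icc (j + 1) kk, q j l) • (EE 𝕜 E q (j + 1) kk * E j)
termination_by kk - j
decreasing_by omega


theorem Icc_prod_bot {𝕜 : Type*} [Field 𝕜] (f : ℕ → 𝕜) (a b : ℕ) (h : a ≤ b) :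
    (∏ i ∈ Finset.Icc a b, f i) = f a * ∏ i ∈ Finset.Icc (a+1) b, f i := by
  rw [← Finset.Ico_add_one_right_eq_Icc, Finset.prod_eq_prod_Ico_succ_bot (by omega), Finset.Ico_add_one_right_eq_Icc]

theorem EE_comm_B {𝕜 B : Type*} [Field 𝕜] [Ring B] [Algebra 𝕜 B]
    (θ : ℕ) (q : ℕ → ℕ → 𝕜) (E : ℕ → B)
    (hrel : ∀ i j, i + 2 ≤ j → j ≤ θ → E i * E j = q i j • (E j * E i))
    (a b j : ℕ) (h1 : j + 2 ≤ a) (h2 : a ≤ b) (h3 : b ≤ θ) :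
    E j * EE 𝕜 E q a b = (∏ i ∈ Finset.Icc a b, q j i) • (EE 𝕜 E q a b * E j) := by
  rcases eq_or_lt_of_le h2 with rfl | hab
  · rw [EE, dif_pos le_rfl, Finset.Icc_self, Finset.prod_singleton]
    exact hrel j a h1 h3
  · have IH := EE_comm_B θ q E hrel (a+1) b j (by omega) hab h3
    rw [EE, dif_neg (by omega)]
    have hja : E j * E a = q j a • (E a * E j) := hrel j a h1 (by omega)
    set W := EE 𝕜 E q (a+1) b with hW
    set P := ∏ i ∈ Finset.Icc (a+1) b, q j i with hP
    have h1' : E j * (E a * W) = (q j a * P) • (E a * (W * E j)) := by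
      rw [← mul_assoc, hja, smul_mul_assoc, mul_assoc, IH, mul_smul_comm, smul_smul]
    have h2' : E j * (W * E a) = (q j a * P) • (W * (E a * E j)) := by
      rw [← mul_assoc, IH, smul_mul_assoc, mul_assoc, hja, mul_smul_comm, smul_smul,
        mul_comm P]
    rw [Icc_prod_bot _ _ _ (le_of_lt hab), ← hP, mul_sub, h1', mul_smul_comm, h2']
    simp only [sub_mul, smul_mul_assoc, mul_assoc, smul_sub, smul_smul]
    module
termination_by b - a

theorem EE_twist_right {𝕜 B A : Type*} [Field 𝕜] [Ring B] [Algebra 𝕜 B]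
    [Ring A] [Algebra 𝕜 A] (q : ℕ → ℕ → 𝕜) (E : ℕ → B) (ι₁ ι₂ : B →ₐ[𝕜] A)
    (htwist : ∀ i j, ι₂ (E i) * ι₁ (E j) = q i j • (ι₁ (E j) * ι₂ (E i)))
    (a b j : ℕ) (h2 : a ≤ b) :
    ι₂ (EE 𝕜 E q a b) * ι₁ (E j)
      = (∏ i ∈ Finset.Icc a b, q i j) • (ι₁ (E j) * ι₂ (EE 𝕜 E q a b)) := by
  rcases eq_or_lt_of_le h2 with rfl | hab
  · rw [EE, dif_pos le_rfl, Finset.Icc_self, Finset.prod_singleton]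
    exact htwist a j
  · have IH := EE_twist_right q E ι₁ ι₂ htwist (a+1) b j hab
    rw [EE, dif_neg (by omega)]
    set W := ι₂ (EE 𝕜 E q (a+1) b) with hWd
    set P := ∏ i ∈ Finset.Icc (a+1) b, q i j with hP
    set x := ι₂ (E a) with hx
    set z := ι₁ (E j) with hz
    have hxz : x * z = q a j • (z * x) := htwist a j
    have h1' : (x * W) * z = (q a j * P) • (z * (x * W)) := by
      rw [mul_assoc, IH, mul_smul_comm, ← mul_assoc, hxz, smul_mul_assoc, smul_smul,
        mul_assoc, mul_comm P]
    have h2' : (W * x) * z = (q a j * P) • (z * (W * x)) := by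
      rw [mul_assoc, hxz, mul_smul_comm, ← mul_assoc, IH, smul_mul_assoc, smul_smul,
        mul_assoc, mul_comm (q a j)]
    rw [map_sub, map_smul, map_mul, map_mul,
      Icc_prod_bot _ _ _ (le_of_lt hab), ← hP, ← hWd, ← hx, sub_mul, smul_mul_assoc, h1', h2']
    simp only [smul_sub, smul_smul, mul_smul_comm, mul_sub, mul_assoc]
    module
termination_by b - a

theorem EE_twist_left {𝕜 B A : Type*} [Field 𝕜] [Ring B] [Algebra 𝕜 B]
    [Ring A] [Algebra 𝕜 A] (q : ℕ → ℕ → 𝕜) (E : ℕ → B) (ι₁ ι₂ : B →ₐ[𝕜] A)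
    (htwist : ∀ i j, ι₂ (E i) * ι₁ (E j) = q i j • (ι₁ (E j) * ι₂ (E i)))
    (a b j : ℕ) (h2 : a ≤ b) :
    ι₂ (E j) * ι₁ (EE 𝕜 E q a b)
      = (∏ i ∈ Finset.Icc a b, q j i) • (ι₁ (EE 𝕜 E q a b) * ι₂ (E j)) := by
  rcases eq_or_lt_of_le h2 with rfl | hab
  · rw [EE, dif_pos le_rfl, Finset.Icc_self, Finset.prod_singleton]
    exact htwist j a
  · have IH := EE_twist_left q E ι₁ ι₂ htwist (a+1) b j hab
    rw [EE, dif_neg (by omega)]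
    set W := ι₁ (EE 𝕜 E q (a+1) b) with hWd
    set P := ∏ i ∈ Finset.Icc (a+1) b, q j i with hP
    set x := ι₁ (E a) with hx
    set z := ι₂ (E j) with hz
    have hxz : z * x = q j a • (x * z) := htwist j a
    have h1' : z * (x * W) = (q j a * P) • ((x * W) * z) := by
      rw [← mul_assoc, hxz, smul_mul_assoc, mul_assoc, IH, mul_smul_comm, smul_smul,
        mul_assoc]
    have h2' : z * (W * x) = (q j a * P) • ((W * x) * z) := by
      rw [← mul_assoc, IH, smul_mul_assoc, mul_assoc, hxz, mul_smul_comm, smul_smul,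
        mul_comm P, mul_assoc]
    rw [map_sub, map_smul, map_mul, map_mul,
      Icc_prod_bot _ _ _ (le_of_lt hab), ← hP, ← hWd, ← hx, mul_sub, mul_smul_comm, h1', h2']
    simp only [smul_sub, smul_smul, smul_mul_assoc, sub_mul, mul_assoc]
    module
termination_by b - a

theorem main_aux {𝕜 B A : Type*} [Field 𝕜]
    [Ring B] [Algebra 𝕜 B] [Ring A] [Algebra 𝕜 A]
    (θ : ℕ) (q : ℕ → ℕ → 𝕜) (E : ℕ → B)
    (Δ ι₁ ι₂ : B →ₐ[𝕜] A)
    (hsuper : ∀ i j, i + 1 < j → j ≤ θ → q i j * q j i = 1)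
    (hrel : ∀ i j, i + 2 ≤ j → j ≤ θ → E i * E j = q i j • (E j * E i))
    (hprim : ∀ i, Δ (E i) = ι₁ (E i) + ι₂ (E i))
    (htwist : ∀ i j, ι₂ (E i) * ι₁ (E j) = q i j • (ι₁ (E j) * ι₂ (E i)))
    (j kk : ℕ) (h1 : 1 ≤ j) (h2 : j ≤ kk) (h3 : kk ≤ θ) :
    Δ (EE 𝕜 E q j kk) =
        ι₁ (EE 𝕜 E q j kk) + ι₂ (EE 𝕜 E q j kk) +
          ∑ l ∈ Finset.Ico j kk,
            (1 - q l (l + 1) * q (l + 1) l) •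
              (ι₁ (EE 𝕜 E q j l) * ι₂ (EE 𝕜 E q (l + 1) kk)) := by
  rcases eq_or_lt_of_le h2 with rfl | hjk
  · rw [EE, dif_pos le_rfl]
    simp [hprim j]
  · have IH := main_aux θ q E Δ ι₁ ι₂ hsuper hrel hprim htwist (j+1) kk (by omega) hjk h3
    have hEjj : EE 𝕜 E q j j = E j := by rw [EE, dif_pos le_rfl]
    rw [Finset.sum_eq_sum_Ico_succ_bot hjk, hEjj, EE, dif_neg (by omega)]
    simp only [map_sub, map_mul, map_smul]
    rw [hprim j, IH]
    -- abbreviations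
    set a := ι₁ (E j) with ha
    set b := ι₂ (E j) with hb
    set T₁ := ι₁ (EE 𝕜 E q (j+1) kk) with hT₁
    set T₂ := ι₂ (EE 𝕜 E q (j+1) kk) with hT₂
    set c := ∏ l ∈ Finset.Icc (j + 1) kk, q j l with hc
    -- scalar facts
    have hsplit : ∀ k, j + 1 ≤ k → k ≤ kk →
        (∏ i ∈ Finset.Icc (j+1) k, q j i) * (∏ i ∈ Finset.Icc (k+1) kk, q j i) = c := by
      intro k hk1 hk2
      rw [hc, Finset.Icc_add_one_left_eq_Ioc, Finset.Icc_add_one_left_eq_Ioc, Finset.Icc_add_one_left_eq_Ioc]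
      exact Finset.prod_Ioc_consecutive _ (by omega) hk2
    have hone : ∀ a', j + 2 ≤ a' →
        (∏ i ∈ Finset.Icc a' kk, q j i) * (∏ i ∈ Finset.Icc a' kk, q i j) = 1 := by
      intro a' ha'
      rw [← Finset.prod_mul_distrib]
      apply Finset.prod_eq_one
      intro i hi
      rw [Finset.mem_Icc] at hi
      exact hsuper j i (by omega) (le_trans hi.2 h3)
    have hcd : c * (∏ i ∈ Finset.Icc (j+1) kk, q i j) = q j (j+1) * q (j+1) j := by
      rw [hc, ← Finset.prod_mul_distrib,
        Icc_prod_bot (fun i => q j i * q i j) _ _ (by omega)]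
      have h1 : ∏ i ∈ Finset.Icc (j+1+1) kk, (q j i * q i j) = 1 := by
        apply Finset.prod_eq_one
        intro i hi
        rw [Finset.mem_Icc] at hi
        exact hsuper j i (by omega) (le_trans hi.2 h3)
      rw [h1, mul_one]
    have hP2 : ∀ k, j + 1 ≤ k → k ≤ kk →
        c * (∏ i ∈ Finset.Icc (k+1) kk, q i j) = ∏ i ∈ Finset.Icc (j+1) k, q j i := by
      intro k hk1 hk2
      rw [← hsplit k hk1 hk2, mul_assoc, hone (k+1) (by omega), mul_one]
    -- commutation facts for the non-sum parts
    have hbT1 : b * T₁ = c • (T₁ * b) :=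
      EE_twist_left q E ι₁ ι₂ htwist (j+1) kk j (by omega)
    have hT2a : T₂ * a = (∏ i ∈ Finset.Icc (j+1) kk, q i j) • (a * T₂) :=
      EE_twist_right q E ι₁ ι₂ htwist (j+1) kk j (by omega)
    -- per-summand identity
    have key : ∀ k ∈ Finset.Ico (j+1) kk,
        (1 - q k (k + 1) * q (k + 1) k) • (ι₁ (EE 𝕜 E q j k) * ι₂ (EE 𝕜 E q (k + 1) kk))
          = (a * ((1 - q k (k + 1) * q (k + 1) k) •
                (ι₁ (EE 𝕜 E q (j+1) k) * ι₂ (EE 𝕜 E q (k + 1) kk)))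
            + b * ((1 - q k (k + 1) * q (k + 1) k) •
                (ι₁ (EE 𝕜 E q (j+1) k) * ι₂ (EE 𝕜 E q (k + 1) kk))))
          - (c • (((1 - q k (k + 1) * q (k + 1) k) •
                (ι₁ (EE 𝕜 E q (j+1) k) * ι₂ (EE 𝕜 E q (k + 1) kk))) * a)
            + c • (((1 - q k (k + 1) * q (k + 1) k) •
                (ι₁ (EE 𝕜 E q (j+1) k) * ι₂ (EE 𝕜 E q (k + 1) kk))) * b)) := by
      intro k hk
      rw [Finset.mem_Ico] at hk
      set U := ι₁ (EE 𝕜 E q (j+1) k) with hU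
      set V := ι₂ (EE 𝕜 E q (k+1) kk) with hV
      have hUjk : ι₁ (EE 𝕜 E q j k) = a * U - (∏ i ∈ Finset.Icc (j+1) k, q j i) • (U * a) := by
        rw [EE, dif_neg (by omega), map_sub, map_smul, map_mul, map_mul]
      have hbU : b * U = (∏ i ∈ Finset.Icc (j+1) k, q j i) • (U * b) :=
        EE_twist_left q E ι₁ ι₂ htwist (j+1) k j hk.1
      have hVa : V * a = (∏ i ∈ Finset.Icc (k+1) kk, q i j) • (a * V) :=
        EE_twist_right q E ι₁ ι₂ htwist (k+1) kk j (by omega)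
      have hbV : b * V = (∏ i ∈ Finset.Icc (k+1) kk, q j i) • (V * b) := by
        rw [hb, hV, ← map_mul,
          EE_comm_B θ q E hrel (k+1) kk j (by omega) (by omega) h3, map_smul, map_mul]
      have hbUV : b * (U * V) = c • ((U * V) * b) := by
        rw [← mul_assoc, hbU, smul_mul_assoc, mul_assoc, hbV, mul_smul_comm, smul_smul,
          hsplit k hk.1 (le_of_lt hk.2), mul_assoc]
      have hUVa : (U * V) * a = (∏ i ∈ Finset.Icc (k+1) kk, q i j) • (U * (a * V)) := by
        rw [mul_assoc, hVa, mul_smul_comm]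
      rw [hUjk, mul_smul_comm, mul_smul_comm, smul_mul_assoc, smul_mul_assoc, hbUV, hUVa,
        ← hP2 k hk.1 (le_of_lt hk.2)]
      simp only [sub_mul, smul_mul_assoc, smul_sub, smul_smul, mul_assoc]
      module
    rw [Finset.sum_congr rfl key, Finset.sum_sub_distrib, Finset.sum_add_distrib,
      Finset.sum_add_distrib]
    simp only [Finset.mul_sum, Finset.sum_mul, Finset.smul_sum, mul_add, add_mul, smul_add]
    rw [hbT1, hT2a, ← hcd, Finset.sum_add_distrib]
    module
termination_by kk - j

/-- In the distinguished pre-Nichols algebra of super type `A_θ`, the iterated adjoint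
elements `E_{j,k}` satisfy
`Δ(E_{j,k}) = E_{j,k} ⊗ 1 + 1 ⊗ E_{j,k} + ∑_{j ≤ ℓ < k} (1 − q_{ℓ,ℓ+1} q_{ℓ+1,ℓ}) E_{j,ℓ} ⊗ E_{ℓ+1,k}`.
Here `B = U^+(V)`, `A` is its braided tensor square with the twisted product, `ι₁ x = x ⊗ 1`
and `ι₂ y = 1 ⊗ y` the two algebra embeddings (with the twist rule
`ι₂(E_i) ι₁(E_j) = q_{ij} • ι₁(E_j) ι₂(E_i)`), `Δ` is the (algebra-map) coproduct with the
generators `E_i` primitive, and the super type `A` conditions `q_{ij} q_{ji} = 1` for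
`|i − j| > 1` together with the relations `E_i E_j = q_{ij} E_j E_i` for `j − i ≥ 2` hold. -/
theorem coproduct_EE_superTypeA {𝕜 B A : Type*} [Field 𝕜]
    [Ring B] [Algebra 𝕜 B] [Ring A] [Algebra 𝕜 A]
    (θ : ℕ) (q : ℕ → ℕ → 𝕜) (E : ℕ → B)
    (Δ ι₁ ι₂ : B →ₐ[𝕜] A)
    (hsuper : ∀ i j, i + 1 < j → j ≤ θ → q i j * q j i = 1)
    (hrel : ∀ i j, i + 2 ≤ j → j ≤ θ → E i * E j = q i j • (E j * E i))
    (hprim : ∀ i, Δ (E i) = ι₁ (E i) + ι₂ (E i))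
    (htwist : ∀ i j, ι₂ (E i) * ι₁ (E j) = q i j • (ι₁ (E j) * ι₂ (E i))) :
    ∀ j kk, 1 ≤ j → j ≤ kk → kk ≤ θ →
      Δ (EE 𝕜 E q j kk) =
        ι₁ (EE 𝕜 E q j kk) + ι₂ (EE 𝕜 E q j kk) +
          ∑ l ∈ Finset.Ico j kk,
            (1 - q l (l + 1) * q (l + 1) l) •
              (ι₁ (EE 𝕜 E q j l) * ι₂ (EE 𝕜 E q (l + 1) kk)) := by
  intro j kk h1 h2 h3
  exact main_aux θ q E Δ ι₁ ι₂ hsuper hrel hprim htwist j kk h1 h2 h3
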